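/- arXiv:2411.14227 — 4 statements merged into one kernel-verified Lean document; each statement's English description precedes it below -/
import Mathlib

section
/- Let $\mathcal{C}$ be a clutter whose edge ideal $I(\mathcal{C})$ satisfies the strong persistence property, let $x$ be a new vertex, and let $\mathcal{C}'$ be the clutter whose edges are the full old vertex set $V(\mathcal{C})$ together with all cones $f \cup \{x\}$ for $f \in E(\mathcal{C})$. Then $I(\mathcal{C}')$ satisfies the strong persistence property, i.e., $(I(\mathcal{C}')^{k+1} : I(\mathcal{C}')) = I(\mathcal{C}')^k$ for all $k \ge 1$. -/
open MvPolynomial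

/-- The edge ideal of a clutter given by its (finite) edge set. -/
noncomputable def edgeIdeal {n : ℕ} (K : Type*) [Field K] (E : Finset (Finset (Fin n))) :
    Ideal (MvPolynomial (Fin n) K) :=
  Ideal.span ((fun e => ∏ i ∈ e, (X i : MvPolynomial (Fin n) K)) '' (E : Set (Finset (Fin n))))

/-- The strong persistence property: `(I^{k+1} : I) = I^k` for all `k ≥ 1`. -/
def StrongPersistence {n : ℕ} {K : Type*} [Field K]
    (I : Ideal (MvPolynomial (Fin n) K)) : Prop :=
  ∀ k : ℕ, 1 ≤ k → Submodule.colon (I ^ (k + 1)) I = I ^ k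

namespace Stmt10Aux

open Pointwise

variable {n : ℕ} {K : Type*} [Field K]

/-- exponent vector of a squarefree monomial -/
noncomputable def dvec (e : Finset (Fin n)) : Fin n →₀ ℕ := ∑ i ∈ e, Finsupp.single i 1

lemma dvec_apply (e : Finset (Fin n)) (w : Fin n) : dvec e w = if w ∈ e then 1 else 0 := by
  classical
  unfold dvec
  rw [Finsupp.finset_sum_apply]
  simp [Finsupp.single_apply]

lemma prod_X_eq (e : Finset (Fin n)) :
    (∏ i ∈ e, (X i : MvPolynomial (Fin n) K)) = monomial (dvec e) 1 := by
  classical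
  induction e using Finset.induction with
  | empty => simp [dvec]
  | insert _ _ h ih =>
    rw [Finset.prod_insert h, ih]
    unfold dvec
    rw [Finset.sum_insert h, X, monomial_mul, one_mul]

/-- m-fold pointwise sums of a set -/
def sumset : ℕ → Set (Fin n →₀ ℕ) → Set (Fin n →₀ ℕ)
  | 0, _ => {0}
  | m + 1, A => A + sumset m A

lemma nsmul_apply (m : ℕ) (f : Fin n →₀ ℕ) (w : Fin n) : (m • f) w = m * f w := by
  induction m with
  | zero => simp
  | succ m ih => rw [succ_nsmul, Finsupp.add_apply, ih]; ring

lemma sumset_apply_zero {A : Set (Fin n →₀ ℕ)} {y : Fin n} (hA : ∀ a ∈ A, a y = 0) :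
    ∀ m, ∀ g ∈ sumset m A, g y = 0 := by
  intro m
  induction m with
  | zero => intro g hg; rw [Set.mem_singleton_iff.mp hg]; rfl
  | succ m ih =>
    rintro g hg
    rw [sumset, Set.mem_add] at hg
    obtain ⟨a, ha, b, hb, rfl⟩ := hg
    rw [Finsupp.add_apply, hA a ha, ih b hb]

lemma mem_coneset_elim {v ex : Fin n →₀ ℕ} {A : Set (Fin n →₀ ℕ)} {m : ℕ} {g : Fin n →₀ ℕ}
    (hg : g ∈ sumset m (insert v ((fun w => ex + w) '' A))) :
    ∃ j ≤ m, ∃ b ∈ sumset j A, g = (m - j) • v + j • ex + b := by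
  induction m generalizing g with
  | zero =>
    refine ⟨0, le_rfl, 0, rfl, ?_⟩
    rw [Set.mem_singleton_iff.mp hg]; simp
  | succ m ih =>
    rw [sumset, Set.mem_add] at hg
    obtain ⟨s, hs, h, hh, rfl⟩ := hg
    obtain ⟨j, hj, b, hb, rfl⟩ := ih hh
    rcases hs with rfl | ⟨a, ha, rfl⟩
    · refine ⟨j, by omega, b, hb, ?_⟩
      rw [show m + 1 - j = (m - j) + 1 by omega, succ_nsmul]
      abel
    · refine ⟨j + 1, by omega, a + b, ⟨a, ha, b, hb, rfl⟩, ?_⟩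
      rw [show m + 1 - (j + 1) = m - j by omega, succ_nsmul]
      abel
      exact add_assoc _ _ _

lemma mem_coneset_intro {v ex : Fin n →₀ ℕ} {A : Set (Fin n →₀ ℕ)} {m j : ℕ} (hj : j ≤ m)
    {b : Fin n →₀ ℕ} (hb : b ∈ sumset j A) :
    (m - j) • v + j • ex + b ∈ sumset m (insert v ((fun w => ex + w) '' A)) := by
  induction m generalizing j b with
  | zero =>
    have hj0 : j = 0 := by omega
    subst hj0
    rw [Set.mem_singleton_iff.mp hb]
    simp [sumset]
  | succ m ih =>
    rcases Nat.lt_or_ge j (m + 1) with hlt | hge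
    · have hjm : j ≤ m := by omega
      rw [sumset, Set.mem_add]
      refine ⟨v, Set.mem_insert _ _, (m - j) • v + j • ex + b, ih hjm hb, ?_⟩
      rw [show m + 1 - j = (m - j) + 1 by omega, succ_nsmul]
      abel
    · have hjm : j = m + 1 := by omega
      subst hjm
      rw [sumset, Set.mem_add] at hb
      obtain ⟨a, ha, b', hb', rfl⟩ := hb
      rw [sumset, Set.mem_add]
      refine ⟨ex + a, Set.mem_insert_of_mem _ ⟨a, ha, rfl⟩,
        (m - m) • v + m • ex + b', ih le_rfl hb', ?_⟩
      rw [Nat.sub_self, Nat.sub_self, succ_nsmul]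
      abel

lemma image_monomial_add (A B : Set (Fin n →₀ ℕ)) :
    ((fun s => monomial s (1 : K)) '' (A + B))
      = ((fun s => monomial s (1 : K)) '' A) * ((fun s => monomial s (1 : K)) '' B) := by
  ext q
  simp only [Set.mem_mul, Set.mem_add, Set.mem_image]
  constructor
  · rintro ⟨_, ⟨a, ha, b, hb, rfl⟩, rfl⟩
    exact ⟨monomial a 1, ⟨a, ha, rfl⟩, monomial b 1, ⟨b, hb, rfl⟩, by rw [monomial_mul, one_mul]⟩
  · rintro ⟨_, ⟨a, ha, rfl⟩, _, ⟨b, hb, rfl⟩, rfl⟩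
    exact ⟨a + b, ⟨a, ha, b, hb, rfl⟩, by rw [monomial_mul, one_mul]⟩

lemma span_pow_eq (A : Set (Fin n →₀ ℕ)) (m : ℕ) :
    (Ideal.span ((fun s => monomial s (1 : K)) '' A)) ^ m
      = Ideal.span ((fun s => monomial s (1 : K)) '' sumset m A) := by
  induction m with
  | zero => simp [sumset, Ideal.span_singleton_one]
  | succ m ih =>
    rw [pow_succ', ih, Ideal.span_mul_span', ← image_monomial_add]
    rfl

lemma edgeIdeal_eq (E : Finset (Finset (Fin n))) :
    edgeIdeal K E = Ideal.span ((fun s => monomial s (1 : K)) '' (dvec '' ↑E)) := by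
  unfold edgeIdeal
  congr 1
  rw [Set.image_image]
  exact Set.image_congr fun e _ => prod_X_eq e

lemma mem_pow_iff (E : Finset (Finset (Fin n))) (m : ℕ) (p : MvPolynomial (Fin n) K) :
    p ∈ (edgeIdeal K E) ^ m ↔ ∀ c ∈ p.support, ∃ g ∈ sumset m (dvec '' ↑E), g ≤ c := by
  rw [edgeIdeal_eq, span_pow_eq, mem_ideal_span_monomial_image]

end Stmt10Aux

open Stmt10Aux

/-- If the clutter `𝒞` has the strong persistence property, `x ∉ V(𝒞)`,
and `𝒞'` has edges `{V(𝒞)} ∪ {f ∪ {x} : f ∈ E(𝒞)}`, then `I(𝒞')` has the strong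
persistence property. -/
theorem stmt10 {n : ℕ} {K : Type*} [Field K]
    (V : Finset (Fin n)) (E : Finset (Finset (Fin n)))
    (hVE : ∀ e ∈ E, e ⊆ V)
    (hclutter : ∀ e ∈ E, ∀ f ∈ E, e ⊆ f → e = f)
    (x : Fin n) (hx : x ∉ V)
    (hspp : StrongPersistence (edgeIdeal K E)) :
    StrongPersistence (edgeIdeal K (insert V (E.image (insert x)))) := by
  classical
  intro k hk
  have hAx : ∀ a ∈ (dvec '' (↑E : Set (Finset (Fin n)))), a x = 0 := by
    rintro a ⟨e, he, rfl⟩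
    rw [dvec_apply]
    simp only [ite_eq_right_iff]
    intro hxe
    exact absurd (hVE e he hxe) hx
  have hvx : dvec V x = 0 := by rw [dvec_apply, if_neg hx]
  have hAset : dvec '' (↑(insert V (E.image (insert x))) : Set (Finset (Fin n)))
      = insert (dvec V)
          ((fun w => Finsupp.single x 1 + w) '' (dvec '' (↑E : Set (Finset (Fin n))))) := by
    rw [Finset.coe_insert, Set.image_insert_eq, Finset.coe_image, Set.image_image,
      Set.image_image]
    congr 1
    apply Set.image_congr
    intro e he
    have hxe : x ∉ e := fun hmem => hx (hVE e he hmem)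
    show dvec (insert x e) = Finsupp.single x 1 + dvec e
    unfold dvec
    rw [Finset.sum_insert hxe]
  have hcrit : ∀ (m : ℕ) (p : MvPolynomial (Fin n) K),
      p ∈ (edgeIdeal K (insert V (E.image (insert x)))) ^ m ↔
        ∀ c ∈ p.support, ∃ g ∈ sumset m (insert (dvec V)
          ((fun w => Finsupp.single x 1 + w) '' (dvec '' (↑E : Set (Finset (Fin n)))))),
            g ≤ c := by
    intro m p
    rw [mem_pow_iff, hAset]
  apply le_antisymm
  · -- hard inclusion
    intro p hp
    refine (hcrit k p).mpr ?_
    intro c hc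
    -- hypothesis from multiplying by the generator `monomial (dvec V) 1`
    have humem : (monomial (dvec V) (1 : K)) ∈ edgeIdeal K (insert V (E.image (insert x))) := by
      rw [edgeIdeal_eq]
      exact Ideal.subset_span ⟨dvec V, ⟨V, by simp, rfl⟩, rfl⟩
    have h1 : p * monomial (dvec V) 1
        ∈ (edgeIdeal K (insert V (E.image (insert x)))) ^ (k + 1) := by
      have := Submodule.mem_colon.mp hp _ humem
      rwa [smul_eq_mul] at this
    have h1s : c + dvec V ∈ (p * monomial (dvec V) (1 : K)).support := by
      rw [mem_support_iff, coeff_mul_monomial, mul_one]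
      exact mem_support_iff.mp hc
    obtain ⟨g, hg, hgle⟩ := (hcrit _ _).mp h1 _ h1s
    obtain ⟨j, hj, b, hb, rfl⟩ := mem_coneset_elim hg
    have hbx : b x = 0 := sumset_apply_zero hAx j b hb
    rw [Finsupp.le_def] at hgle
    by_cases hjk : j ≤ k
    · refine ⟨(k - j) • dvec V + j • Finsupp.single x 1 + b, mem_coneset_intro hjk hb, ?_⟩
      rw [Finsupp.le_def]
      intro w
      have h := hgle w
      simp only [Finsupp.add_apply] at h ⊢
      have hrw : ((k + 1 - j) • dvec V) w = ((k - j) • dvec V) w + dvec V w := by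
        rw [show k + 1 - j = (k - j) + 1 by omega, succ_nsmul, Finsupp.add_apply]
      rw [hrw] at h
      omega
    · have hjeq : j = k + 1 := by omega
      subst hjeq
      have ht : k + 1 ≤ c x := by
        have h := hgle x
        simp only [Finsupp.add_apply, nsmul_apply, hvx, hbx, Finsupp.single_eq_same] at h
        omega
      -- hypotheses from multiplying by the cone generators
      have h2 : ∀ e ∈ E, ∃ j₂ ≤ k + 1, ∃ b₂ ∈ sumset j₂ (dvec '' (↑E : Set (Finset (Fin n)))),
          (k + 1 - j₂) • dvec V + j₂ • Finsupp.single x 1 + b₂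
            ≤ c + (Finsupp.single x 1 + dvec e) := by
        intro e he
        have hgen : (monomial (Finsupp.single x 1 + dvec e) (1 : K))
            ∈ edgeIdeal K (insert V (E.image (insert x))) := by
          rw [edgeIdeal_eq]
          apply Ideal.subset_span
          refine ⟨Finsupp.single x 1 + dvec e, ?_, rfl⟩
          rw [hAset]
          exact Set.mem_insert_of_mem _ ⟨dvec e, ⟨e, he, rfl⟩, rfl⟩
        have hmul : p * monomial (Finsupp.single x 1 + dvec e) 1
            ∈ (edgeIdeal K (insert V (E.image (insert x)))) ^ (k + 1) := by
          have := Submodule.mem_colon.mp hp _ hgen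
          rwa [smul_eq_mul] at this
        have hsup : c + (Finsupp.single x 1 + dvec e)
            ∈ (p * monomial (Finsupp.single x 1 + dvec e) (1 : K)).support := by
          rw [mem_support_iff, coeff_mul_monomial, mul_one]
          exact mem_support_iff.mp hc
        obtain ⟨g₂, hg₂, hg₂le⟩ := (hcrit _ _).mp hmul _ hsup
        obtain ⟨j₂, hj₂, b₂, hb₂, rfl⟩ := mem_coneset_elim hg₂
        exact ⟨j₂, hj₂, b₂, hb₂, hg₂le⟩
      by_cases hall : ∀ e ∈ E, monomial (c + dvec e) (1 : K) ∈ (edgeIdeal K E) ^ (k + 1)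
      · -- the strong persistence case
        have hcol : monomial c (1 : K)
            ∈ Submodule.colon ((edgeIdeal K E) ^ (k + 1)) (edgeIdeal K E) := by
          rw [Submodule.mem_colon]
          intro q hq
          rw [smul_eq_mul]
          rw [edgeIdeal_eq] at hq
          induction hq using Submodule.span_induction with
          | mem r hr =>
            obtain ⟨s, ⟨e, he, rfl⟩, rfl⟩ := hr
            rw [monomial_mul, one_mul]
            exact hall e he
          | zero => rw [mul_zero]; exact zero_mem _
          | add a b ha hb iha ihb => rw [mul_add]; exact add_mem iha ihb
          | smul r q hq ih => rw [mul_smul_comm]; exact Submodule.smul_mem _ _ ih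
        have hIk : monomial c (1 : K) ∈ (edgeIdeal K E) ^ k := by
          rw [← hspp k hk]; exact hcol
        have hcs : c ∈ (monomial c (1 : K)).support := by
          rw [support_monomial, if_neg one_ne_zero]
          exact Finset.mem_singleton_self c
        obtain ⟨b', hb', hble⟩ := (mem_pow_iff E k _).mp hIk c hcs
        have hb'x : b' x = 0 := sumset_apply_zero hAx k b' hb'
        refine ⟨(k - k) • dvec V + k • Finsupp.single x 1 + b', mem_coneset_intro le_rfl hb', ?_⟩
        rw [Finsupp.le_def]
        intro w
        have hble' := Finsupp.le_def.mp hble w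
        simp only [Finsupp.add_apply, nsmul_apply, Nat.sub_self, zero_mul, zero_add]
        by_cases hwx : w = x
        · subst hwx
          rw [Finsupp.single_eq_same, hb'x, mul_one]
          omega
        · rw [Finsupp.single_eq_of_ne' fun hh => hwx hh.symm, mul_zero, zero_add]
          exact hble'
      · -- some cone hypothesis already gives a small decomposition
        push_neg at hall
        obtain ⟨e, he, hnot⟩ := hall
        obtain ⟨j₂, hj₂, b₂, hb₂, hle₂⟩ := h2 e he
        have hb₂x : b₂ x = 0 := sumset_apply_zero hAx j₂ b₂ hb₂
        rw [Finsupp.le_def] at hle₂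
        have hj₂k : j₂ ≤ k := by
          by_contra hcon
          have hje : j₂ = k + 1 := by omega
          subst hje
          apply hnot
          rw [mem_pow_iff]
          intro c' hc'
          rw [support_monomial, if_neg one_ne_zero, Finset.mem_singleton] at hc'
          subst hc'
          refine ⟨b₂, hb₂, ?_⟩
          rw [Finsupp.le_def]
          intro w
          have h := hle₂ w
          simp only [Finsupp.add_apply, nsmul_apply] at h ⊢
          by_cases hwx : w = x
          · subst hwx
            rw [hb₂x]
            omega
          · rw [Finsupp.single_eq_of_ne' fun hh => hwx hh.symm, mul_zero] at h
            omega
        refine ⟨(k - j₂) • dvec V + j₂ • Finsupp.single x 1 + b₂, mem_coneset_intro hj₂k hb₂, ?_⟩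
        rw [Finsupp.le_def]
        intro w
        have hdev : dvec e w ≤ dvec V w := by
          rw [dvec_apply, dvec_apply]
          by_cases hwe : w ∈ e
          · rw [if_pos hwe, if_pos (hVE e he hwe)]
          · rw [if_neg hwe]
            omega
        by_cases hwx : w = x
        · subst hwx
          simp only [Finsupp.add_apply, nsmul_apply, hvx, hb₂x, Finsupp.single_eq_same, mul_zero,
            mul_one]
          omega
        · have h := hle₂ w
          simp only [Finsupp.add_apply] at h ⊢
          have hrw : ((k + 1 - j₂) • dvec V) w = ((k - j₂) • dvec V) w + dvec V w := by
            rw [show k + 1 - j₂ = (k - j₂) + 1 by omega, succ_nsmul, Finsupp.add_apply]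
          rw [hrw, Finsupp.single_eq_of_ne' fun hh => hwx hh.symm] at h
          omega
  · -- easy inclusion
    intro p hp
    rw [Submodule.mem_colon]
    intro q hq
    rw [smul_eq_mul]
    have := Ideal.mul_mem_mul hp hq
    rwa [← pow_succ] at this
end

section
/- Let $X$ be a finite set and $x, y \notin X$ distinct new vertices, and let $\mathcal{C}$ be a clutter on $X \cup \{x,y\}$ such that every edge $e \in E(\mathcal{C})$ contains $x$ or $y$ but not both. Let $\mathcal{C}'$ be the clutter with $E(\mathcal{C}') = E(\mathcal{C}) \cup \{\{x,y\}\}$. Then $I(\mathcal{C}')$ satisfies the strong persistence property: $(I(\mathcal{C}')^{k+1} : I(\mathcal{C}')) = I(\mathcal{C}')^k$ for all $k \ge 1$. -/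
open MvPolynomial

namespace Stmt11Aux

variable {n : ℕ} {K : Type*} [Field K]

/-- The exponent vector of an edge. -/
noncomputable def dvec {n : ℕ} (e : Finset (Fin n)) : Fin n →₀ ℕ := ∑ i ∈ e, Finsupp.single i 1

lemma dvec_apply (e : Finset (Fin n)) (j : Fin n) : dvec e j = if j ∈ e then 1 else 0 := by
  classical
  rw [dvec, Finsupp.coe_finset_sum, Finset.sum_apply]
  simp_rw [Finsupp.single_apply]
  exact Finset.sum_ite_eq' e j (fun _ => 1)

lemma prod_X_eq (e : Finset (Fin n)) :
    (∏ i ∈ e, (X i : MvPolynomial (Fin n) K)) = monomial (dvec e) 1 := by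
  classical
  induction e using Finset.induction with
  | empty => simp [dvec]
  | insert _ _ hni ih =>
      rw [Finset.prod_insert hni, ih]
      have hX : (X ‹Fin n› : MvPolynomial (Fin n) K) = monomial (Finsupp.single ‹Fin n› 1) 1 :=
        rfl
      rw [hX, monomial_mul, one_mul]
      simp only [dvec]
      rw [Finset.sum_insert hni]

/-- The set of sums of `m` elements of `D` (with multiplicity). -/
def sums (D : Set (Fin n →₀ ℕ)) (m : ℕ) : Set (Fin n →₀ ℕ) :=
  {v | ∃ c : Multiset (Fin n →₀ ℕ), Multiset.card c = m ∧ (∀ d ∈ c, d ∈ D) ∧ c.sum = v}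

lemma span_pow (D : Set (Fin n →₀ ℕ)) (m : ℕ) :
    (Ideal.span ((fun d => monomial d (1 : K)) '' D)) ^ m =
      Ideal.span ((fun d => monomial d (1 : K)) '' sums D m) := by
  induction m with
  | zero =>
      have h0 : sums D 0 = {0} := by
        ext v
        constructor
        · rintro ⟨c, hc, -, rfl⟩
          rw [Multiset.card_eq_zero] at hc
          simp [hc]
        · rintro rfl
          exact ⟨0, rfl, fun d hd => absurd hd (Multiset.notMem_zero d), rfl⟩
      have h1 : (monomial (0 : Fin n →₀ ℕ) (1 : K)) = 1 := by simp
      rw [pow_zero, h0, Set.image_singleton, h1, Ideal.span_singleton_one, Ideal.one_eq_top]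
  | succ m ih =>
      rw [pow_succ, ih, Ideal.span_mul_span']
      congr 1
      ext p
      simp only [Set.mem_mul, Set.mem_image, sums, Set.mem_setOf_eq]
      constructor
      · rintro ⟨a, ⟨v, ⟨c, hc1, hc2, rfl⟩, rfl⟩, b, ⟨d, hd, rfl⟩, rfl⟩
        refine ⟨c.sum + d, ⟨d ::ₘ c, ?_, ?_, ?_⟩, ?_⟩
        · simp [hc1]
        · intro g hg
          rcases Multiset.mem_cons.mp hg with rfl | hg
          · exact hd
          · exact hc2 g hg
        · rw [Multiset.sum_cons]; exact add_comm d c.sum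
        · simp [monomial_mul]
      · rintro ⟨v, ⟨c, hc1, hc2, rfl⟩, rfl⟩
        have hpos : 0 < Multiset.card c := by omega
        obtain ⟨d, hd⟩ := Multiset.card_pos_iff_exists_mem.mp hpos
        obtain ⟨c', rfl⟩ := Multiset.exists_cons_of_mem hd
        refine ⟨monomial c'.sum 1, ⟨c'.sum, ⟨c', ?_, ?_, rfl⟩, rfl⟩,
          monomial d 1, ⟨d, hc2 d hd, rfl⟩, ?_⟩
        · simpa using hc1
        · exact fun g hg => hc2 g (Multiset.mem_cons_of_mem hg)
        · simp [monomial_mul, Multiset.sum_cons, add_comm]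

lemma mem_pow_iff (D : Set (Fin n →₀ ℕ)) (m : ℕ) (p : MvPolynomial (Fin n) K) :
    p ∈ (Ideal.span ((fun d => monomial d (1 : K)) '' D)) ^ m ↔
      ∀ v ∈ p.support, ∃ c : Multiset (Fin n →₀ ℕ),
        Multiset.card c = m ∧ (∀ d ∈ c, d ∈ D) ∧ c.sum ≤ v := by
  rw [span_pow, mem_ideal_span_monomial_image]
  constructor
  · intro h v hv
    obtain ⟨s, ⟨c, hc1, hc2, rfl⟩, hle⟩ := h v hv
    exact ⟨c, hc1, hc2, hle⟩
  · intro h v hv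
    obtain ⟨c, hc1, hc2, hle⟩ := h v hv
    exact ⟨c.sum, ⟨c, hc1, hc2, rfl⟩, hle⟩

lemma multiset_sum_apply (c : Multiset (Fin n →₀ ℕ)) (j : Fin n) :
    c.sum j = (c.map fun d => d j).sum := by
  induction c using Multiset.induction with
  | empty => simp
  | cons a s ih => simp [ih]

/-- Key shrinking lemma: a multiset of "weight-one" vectors dominated by `u + χ`
whose `x`-coordinate sum is at most `u x` can drop one element to be dominated by `u`. -/
lemma shrink (c : Multiset (Fin n →₀ ℕ)) (u χ : Fin n →₀ ℕ) (x y : Fin n)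
    (hχ : ∀ j, j ≠ x → j ≠ y → χ j = 0)
    (hS : c.sum ≤ u + χ)
    (hle : c.sum x ≤ u x)
    (hley : c.sum y ≤ u y + 1)
    (hcard : 0 < Multiset.card c) :
    ∃ h ∈ c, (c.erase h).sum ≤ u := by
  classical
  by_cases hpos : ∃ h ∈ c, 0 < h y
  · obtain ⟨h, hh, hhy⟩ := hpos
    refine ⟨h, hh, ?_⟩
    intro j
    have hid : h j + (c.erase h).sum j = c.sum j := by
      conv_rhs => rw [← Multiset.cons_erase hh]
      rw [Multiset.sum_cons, Finsupp.add_apply]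
    have hSj : c.sum j ≤ u j + χ j := hS j
    rcases eq_or_ne j x with rfl | hjx
    · omega
    rcases eq_or_ne j y with rfl | hjy
    · omega
    · rw [hχ j hjx hjy] at hSj; omega
  · push_neg at hpos
    have hy0 : ∀ h ∈ c, h y = 0 := fun h hh => Nat.le_zero.mp (hpos h hh)
    have hSy : c.sum y = 0 := by
      rw [multiset_sum_apply]
      rw [Multiset.sum_eq_zero]
      intro a ha
      obtain ⟨d, hd, rfl⟩ := Multiset.mem_map.mp ha
      exact hy0 d hd
    obtain ⟨h, hh⟩ := Multiset.card_pos_iff_exists_mem.mp hcard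
    refine ⟨h, hh, ?_⟩
    intro j
    have hid : h j + (c.erase h).sum j = c.sum j := by
      conv_rhs => rw [← Multiset.cons_erase hh]
      rw [Multiset.sum_cons, Finsupp.add_apply]
    have hSj : c.sum j ≤ u j + χ j := hS j
    rcases eq_or_ne j x with rfl | hjx
    · omega
    rcases eq_or_ne j y with rfl | hjy
    · omega
    · rw [hχ j hjx hjy] at hSj; omega

end Stmt11Aux

open Stmt11Aux

/-- If every edge of the clutter `𝒞` on `X ∪ {x,y}` contains exactly one
of `x, y`, then adding the edge `{x,y}` yields a clutter with the strong persistence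
property. -/
theorem stmt11 {n : ℕ} {K : Type*} [Field K]
    (Xs : Finset (Fin n)) (x y : Fin n) (hxy : x ≠ y)
    (hx : x ∉ Xs) (hy : y ∉ Xs)
    (E : Finset (Finset (Fin n)))
    (hVE : ∀ e ∈ E, e ⊆ insert x (insert y Xs))
    (hclutter : ∀ e ∈ E, ∀ f ∈ E, e ⊆ f → e = f)
    (hsplit : ∀ e ∈ E, (x ∈ e ∧ y ∉ e) ∨ (x ∉ e ∧ y ∈ e)) :
    StrongPersistence (edgeIdeal K (insert {x, y} E)) := by
  classical
  intro k hk
  set D : Set (Fin n →₀ ℕ) :=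
    dvec '' (((insert {x, y} E : Finset (Finset (Fin n))) : Set (Finset (Fin n)))) with hD
  have hIdeal : edgeIdeal K (insert {x, y} E) =
      Ideal.span ((fun d => monomial d (1 : K)) '' D) := by
    rw [edgeIdeal, hD, ← Set.image_comp]
    exact congrArg Ideal.span (Set.image_congr fun e _ => prod_X_eq e)
  set χ : Fin n →₀ ℕ := dvec ({x, y} : Finset (Fin n)) with hχdef
  have hχmem : χ ∈ D := ⟨{x, y}, by simp, rfl⟩
  have hχx : χ x = 1 := by rw [hχdef, dvec_apply]; simp
  have hχy : χ y = 1 := by rw [hχdef, dvec_apply]; simp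
  have hχ0 : ∀ j, j ≠ x → j ≠ y → χ j = 0 := by
    intro j h1 h2; rw [hχdef, dvec_apply]; simp [h1, h2]
  -- weight-one property of edge vectors
  have hedgewt : ∀ e ∈ E, dvec e x + dvec e y = 1 := by
    intro e he
    rw [dvec_apply, dvec_apply]
    rcases hsplit e he with ⟨h1, h2⟩ | ⟨h1, h2⟩ <;> simp [h1, h2]
  have hwt : ∀ d ∈ D, 1 ≤ d x + d y := by
    rintro d ⟨e, he, rfl⟩
    rcases Finset.mem_insert.mp (by exact_mod_cast he) with rfl | heE
    · rw [dvec_apply, dvec_apply]; simp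
    · exact le_of_eq (hedgewt e heE).symm
  apply le_antisymm
  · -- colon ⊆ I^k
    intro r hr
    rw [hIdeal, mem_pow_iff]
    intro u hu
    -- key consequence of colon membership
    have hkey : ∀ d ∈ D, ∃ c : Multiset (Fin n →₀ ℕ),
        Multiset.card c = k + 1 ∧ (∀ g ∈ c, g ∈ D) ∧ c.sum ≤ u + d := by
      intro d hd
      have h1 : monomial d (1 : K) ∈ edgeIdeal K (insert {x, y} E) := by
        rw [hIdeal]
        exact Ideal.subset_span (Set.mem_image_of_mem _ hd)
      have h2 := Submodule.mem_colon.mp hr _ h1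
      rw [smul_eq_mul, hIdeal] at h2
      rw [mem_pow_iff] at h2
      refine h2 (u + d) ?_
      rw [mem_support_iff, coeff_mul_monomial, mul_one]
      exact mem_support_iff.mp hu
    obtain ⟨c, hc1, hc2, hc3⟩ := hkey χ hχmem
    by_cases hmem : χ ∈ c
    · -- drop the copy of χ
      refine ⟨c.erase χ, ?_, fun g hg => hc2 g (Multiset.mem_of_mem_erase hg), ?_⟩
      · rw [Multiset.card_erase_of_mem hmem, hc1]; rfl
      · intro j
        have hid : χ j + (c.erase χ).sum j = c.sum j := by
          conv_rhs => rw [← Multiset.cons_erase hmem]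
          rw [Multiset.sum_cons, Finsupp.add_apply]
        have hSj : c.sum j ≤ u j + χ j := hc3 j
        omega
    · -- all elements of c come from actual edges
      have hone : ∀ d ∈ c, d x + d y = 1 := by
        intro d hd
        obtain ⟨e, he, rfl⟩ := hc2 d hd
        rcases Finset.mem_insert.mp (by exact_mod_cast he) with rfl | heE
        · exact absurd hd hmem
        · exact hedgewt e heE
      have hsumxy : c.sum x + c.sum y = k + 1 := by
        rw [multiset_sum_apply, multiset_sum_apply, ← Multiset.sum_map_add]
        have : (c.map fun d => d x + d y) = Multiset.replicate (Multiset.card c) 1 := by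
          rw [← Multiset.map_const' c 1]
          exact Multiset.map_congr rfl hone
        rw [this, Multiset.sum_replicate, hc1]; simp
      have hbx : c.sum x ≤ u x + 1 := by have := hc3 x; rwa [Finsupp.add_apply, hχx] at this
      have hby : c.sum y ≤ u y + 1 := by have := hc3 y; rwa [Finsupp.add_apply, hχy] at this
      have hcard : 0 < Multiset.card c := by omega
      by_cases hcx : c.sum x ≤ u x
      · obtain ⟨h, hh, hle⟩ := shrink c u χ x y hχ0 hc3 hcx hby hcard
        exact ⟨c.erase h, by rw [Multiset.card_erase_of_mem hh, hc1]; rfl,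
          fun g hg => hc2 g (Multiset.mem_of_mem_erase hg), hle⟩
      by_cases hcy : c.sum y ≤ u y
      · have hone' : ∀ d ∈ c, d y + d x = 1 := fun d hd => by rw [add_comm]; exact hone d hd
        have hχ0' : ∀ j, j ≠ y → j ≠ x → χ j = 0 := fun j h1 h2 => hχ0 j h2 h1
        obtain ⟨h, hh, hle⟩ := shrink c u χ y x hχ0' hc3 hcy hbx hcard
        exact ⟨c.erase h, by rw [Multiset.card_erase_of_mem hh, hc1]; rfl,
          fun g hg => hc2 g (Multiset.mem_of_mem_erase hg), hle⟩
      · -- impossible case: combined degree too small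
        exfalso
        push_neg at hcx hcy
        -- find an element of c (it is an edge vector with weight 1)
        obtain ⟨h, hh⟩ := Multiset.card_pos_iff_exists_mem.mp hcard
        have hhD : h ∈ D := hc2 h hh
        have hhwt : h x + h y = 1 := hone h hh
        obtain ⟨c₂, hc₂1, hc₂2, hc₂3⟩ := hkey h hhD
        -- lower bound on combined degree of c₂.sum
        have hlow : k + 1 ≤ c₂.sum x + c₂.sum y := by
          rw [multiset_sum_apply, multiset_sum_apply, ← Multiset.sum_map_add]
          calc k + 1 = Multiset.card c₂ := hc₂1.symm
            _ = (Multiset.replicate (Multiset.card c₂) 1).sum := by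
                rw [Multiset.sum_replicate]; simp
            _ ≤ (c₂.map fun d => d x + d y).sum := by
                rw [← Multiset.map_const' c₂ 1]
                apply Multiset.sum_map_le_sum_map
                intro d hd
                exact hwt d (hc₂2 d hd)
        have hupx : c₂.sum x ≤ u x + h x := by
          have := hc₂3 x; rwa [Finsupp.add_apply] at this
        have hupy : c₂.sum y ≤ u y + h y := by
          have := hc₂3 y; rwa [Finsupp.add_apply] at this
        omega
  · -- I^k ⊆ colon
    intro r hr
    rw [Submodule.mem_colon]
    intro p hp
    rw [smul_eq_mul, pow_succ]
    exact Ideal.mul_mem_mul hr hp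
end

section
/- Let $\mathcal{C}$ be a clutter on a finite vertex set $X$ whose edge ideal has the strong persistence property, and let $x, y \notin X$ be distinct new vertices. Define the clutter $\mathcal{C}'$ on $X \cup \{x,y\}$ with edges $\{e \cup \{x\},\ e \cup \{y\} : e \in E(\mathcal{C})\}$. Then $I(\mathcal{C}')$ has the strong persistence property. -/
open MvPolynomial

namespace Stmt12Aux

variable {σ : Type*} {K : Type*} [Field K]

/-- k-fold pointwise sum of a set of exponent vectors. -/
def iterAdd (S : Set (σ →₀ ℕ)) : ℕ → Set (σ →₀ ℕ)
  | 0 => {0}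
  | k + 1 => Set.image2 (· + ·) S (iterAdd S k)

lemma span_monomial_pow (S : Set (σ →₀ ℕ)) (k : ℕ) :
    Ideal.span ((fun m => monomial m (1 : K)) '' S) ^ k
      = Ideal.span ((fun m => monomial m (1 : K)) '' iterAdd S k) := by
  induction k with
  | zero =>
      simp [iterAdd, Ideal.span_singleton_one]
  | succ k ih =>
      rw [pow_succ', ih, Ideal.span_mul_span]
      congr 1
      ext p
      simp only [Set.mem_iUnion, Set.mem_image, Set.mem_singleton_iff, iterAdd, Set.mem_image2]
      constructor
      · rintro ⟨i, ⟨a, ha, rfl⟩, j, ⟨b, hb, rfl⟩, rfl⟩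
        exact ⟨a + b, ⟨a, ha, b, hb, rfl⟩, by beta_reduce; rw [monomial_mul, one_mul]⟩
      · rintro ⟨_, ⟨a, ha, b, hb, rfl⟩, rfl⟩
        exact ⟨_, ⟨a, ha, rfl⟩, _, ⟨b, hb, rfl⟩, by beta_reduce; rw [monomial_mul, one_mul]⟩

lemma mem_colon_span {R : Type*} [CommRing R] {N : Ideal R} {s : Set R} {r : R}
    (h : ∀ g ∈ s, r * g ∈ N) : r ∈ N.colon (Ideal.span s) := by
  rw [Submodule.mem_colon]
  intro p hp
  induction hp using Submodule.span_induction with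
  | mem g hg => simpa [smul_eq_mul] using h g hg
  | zero => simp
  | add p q _ _ hp hq => simpa [smul_add, mul_add] using N.add_mem hp hq
  | smul a p _ hp => rw [smul_comm]; exact N.smul_mem a hp

lemma iterAdd_apply_eq_zero {S : Set (σ →₀ ℕ)} {x : σ}
    (h : ∀ d ∈ S, d x = 0) : ∀ k, ∀ u ∈ iterAdd S k, u x = 0 := by
  intro k
  induction k with
  | zero => intro u hu; simp [iterAdd] at hu; simp [hu]
  | succ k ih =>
      rintro u ⟨d, hd, w, hw, rfl⟩
      simp [Finsupp.add_apply, h d hd, ih w hw]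

variable [DecidableEq σ]

/-- indicator exponent vector of a finset of variables -/
noncomputable def ind (e : Finset σ) : σ →₀ ℕ := ∑ i ∈ e, Finsupp.single i 1

lemma prod_X_eq (e : Finset σ) :
    ∏ i ∈ e, (X i : MvPolynomial σ K) = monomial (ind e) 1 := by
  induction e using Finset.cons_induction with
  | empty => simp [ind]
  | cons a s ha ih =>
      rw [Finset.prod_cons, ih, show ind (Finset.cons a s ha) = Finsupp.single a 1 + ind s by rw [ind, Finset.sum_cons]; rfl, X, monomial_mul, one_mul]

lemma ind_insert {x : σ} {e : Finset σ} (hx : x ∉ e) :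
    ind (insert x e) = Finsupp.single x 1 + ind e := by
  rw [ind, Finset.sum_insert hx]; rfl

lemma ind_apply_eq_zero {x : σ} {e : Finset σ} (hx : x ∉ e) : ind e x = 0 := by
  rw [ind, Finsupp.finset_sum_apply]
  refine Finset.sum_eq_zero fun i hi => ?_
  rw [Finsupp.single_apply, if_neg]
  rintro rfl; exact hx hi


lemma iterAdd_decompose {D : Set (σ →₀ ℕ)} {x y : σ} :
    ∀ k, ∀ u ∈ iterAdd (((Finsupp.single x 1 + ·) '' D) ∪ ((Finsupp.single y 1 + ·) '' D)) k,
      ∃ w ∈ iterAdd D k, ∃ c d : ℕ, c + d = k ∧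
        u = w + Finsupp.single x c + Finsupp.single y d := by
  intro k
  induction k with
  | zero =>
      intro u hu
      simp only [iterAdd, Set.mem_singleton_iff] at hu
      exact ⟨0, rfl, 0, 0, rfl, by simp [hu]⟩
  | succ k ih =>
      rintro u ⟨g, hg, w', hw', rfl⟩
      obtain ⟨w, hw, c, d, hcd, rfl⟩ := ih w' hw'
      rcases hg with ⟨d0, hd0, rfl⟩ | ⟨d0, hd0, rfl⟩
      · refine ⟨d0 + w, ⟨d0, hd0, w, hw, rfl⟩, c + 1, d, by omega, ?_⟩
        rw [Finsupp.single_add]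
        beta_reduce; abel
      · refine ⟨d0 + w, ⟨d0, hd0, w, hw, rfl⟩, c, d + 1, by omega, ?_⟩
        rw [Finsupp.single_add y d 1]
        beta_reduce; abel

lemma iterAdd_compose {D : Set (σ →₀ ℕ)} {x y : σ} :
    ∀ k c d : ℕ, c + d = k → ∀ w ∈ iterAdd D k,
      w + Finsupp.single x c + Finsupp.single y d
        ∈ iterAdd (((Finsupp.single x 1 + ·) '' D) ∪ ((Finsupp.single y 1 + ·) '' D)) k := by
  intro k
  induction k with
  | zero =>
      intro c d hcd w hw
      simp only [iterAdd, Set.mem_singleton_iff] at hw ⊢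
      obtain ⟨rfl, rfl⟩ : c = 0 ∧ d = 0 := by omega
      simp [hw]
  | succ k ih =>
      rintro c d hcd w ⟨d0, hd0, w', hw', rfl⟩
      rcases c with _ | c
      · rcases d with _ | d
        · omega
        · refine ⟨Finsupp.single y 1 + d0, Or.inr ⟨d0, hd0, rfl⟩,
            w' + Finsupp.single x 0 + Finsupp.single y d, ih 0 d (by omega) w' hw', ?_⟩
          rw [Finsupp.single_add y d 1]
          beta_reduce; abel
      · refine ⟨Finsupp.single x 1 + d0, Or.inl ⟨d0, hd0, rfl⟩,
          w' + Finsupp.single x c + Finsupp.single y d, ih c d (by omega) w' hw', ?_⟩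
        rw [Finsupp.single_add x c 1]
        beta_reduce; abel

end Stmt12Aux

namespace Stmt12Aux

lemma main {n : ℕ} {K : Type*} [Field K] (D : Set (Fin n →₀ ℕ)) (x y : Fin n) (hxy : x ≠ y)
    (hDx : ∀ d ∈ D, d x = 0) (hDy : ∀ d ∈ D, d y = 0) (d0 : Fin n →₀ ℕ) (hd0 : d0 ∈ D)
    (hspp : StrongPersistence (Ideal.span ((fun m => monomial m (1 : K)) '' D))) :
    StrongPersistence (Ideal.span ((fun m => monomial m (1 : K)) ''
      (((Finsupp.single x 1 + ·) '' D) ∪ ((Finsupp.single y 1 + ·) '' D)))) := by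
  classical
  intro k hk
  rw [span_monomial_pow _ (k + 1), span_monomial_pow _ k]
  refine le_antisymm ?_ ?_
  · -- hard direction
    intro f hf
    rw [mem_ideal_span_monomial_image]
    intro m hm
    -- `m₀` is `m` with the `x` and `y` coordinates removed
    set m₀ : Fin n →₀ ℕ := Finsupp.erase y (Finsupp.erase x m) with hm₀def
    have hm₀x : m₀ x = 0 := by
      rw [hm₀def, Finsupp.erase_ne hxy, Finsupp.erase_same]
    have hm₀y : m₀ y = 0 := by rw [hm₀def, Finsupp.erase_same]
    have hm₀i : ∀ i, i ≠ x → i ≠ y → m₀ i = m i := by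
      intro i hix hiy
      rw [hm₀def, Finsupp.erase_ne hiy, Finsupp.erase_ne hix]
    -- key consequence of `hf` for every generator exponent `g`
    have key : ∀ g ∈ ((Finsupp.single x 1 + ·) '' D) ∪ ((Finsupp.single y 1 + ·) '' D),
        ∃ t ∈ iterAdd (((Finsupp.single x 1 + ·) '' D) ∪ ((Finsupp.single y 1 + ·) '' D)) (k + 1),
          t ≤ g + m := by
      intro g hg
      have hgJ : monomial g (1 : K) ∈ Ideal.span ((fun m => monomial m (1 : K)) ''
          (((Finsupp.single x 1 + ·) '' D) ∪ ((Finsupp.single y 1 + ·) '' D))) :=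
        Ideal.subset_span ⟨g, hg, rfl⟩
      have h3 := Submodule.mem_colon.mp hf _ hgJ
      rw [smul_eq_mul, mul_comm, mem_ideal_span_monomial_image] at h3
      refine h3 (g + m) ?_
      rw [mem_support_iff, coeff_monomial_mul, one_mul]
      exact mem_support_iff.mp hm
    -- Claim A: for every `d ∈ D` there is `u` in the `(k+1)`-fold sum of `D` with `u ≤ m₀ + d`
    have claimA : ∀ d ∈ D, ∃ u ∈ iterAdd D (k + 1), u ≤ m₀ + d := by
      intro d hd
      obtain ⟨t, ht, hle⟩ := key (Finsupp.single x 1 + d) (Or.inl ⟨d, hd, rfl⟩)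
      obtain ⟨w, hw, c, dd, hcd, rfl⟩ := iterAdd_decompose (k + 1) t ht
      refine ⟨w, hw, ?_⟩
      rw [Finsupp.le_def]
      intro i
      by_cases hix : i = x
      · subst hix
        rw [iterAdd_apply_eq_zero hDx _ w hw]
        exact Nat.zero_le _
      by_cases hiy : i = y
      · subst hiy
        rw [iterAdd_apply_eq_zero hDy _ w hw]
        exact Nat.zero_le _
      · have h4 := Finsupp.le_def.mp hle i
        simp only [Finsupp.add_apply,
          Finsupp.single_eq_of_ne' (fun h => hix h.symm),
          Finsupp.single_eq_of_ne' (fun h => hiy h.symm), add_zero, zero_add] at h4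
        rw [Finsupp.add_apply, hm₀i i hix hiy]
        omega
    -- Claim B: `k ≤ m x + m y`
    have claimB : k ≤ m x + m y := by
      obtain ⟨t, ht, hle⟩ := key (Finsupp.single x 1 + d0) (Or.inl ⟨d0, hd0, rfl⟩)
      obtain ⟨w, hw, c, dd, hcd, rfl⟩ := iterAdd_decompose (k + 1) t ht
      have hxc := Finsupp.le_def.mp hle x
      have hyd := Finsupp.le_def.mp hle y
      simp only [Finsupp.add_apply, Finsupp.single_eq_same,
        Finsupp.single_eq_of_ne' hxy, Finsupp.single_eq_of_ne' hxy.symm,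
        iterAdd_apply_eq_zero hDx _ w hw, iterAdd_apply_eq_zero hDy _ w hw,
        hDx d0 hd0, hDy d0 hd0, zero_add, add_zero] at hxc hyd
      omega
    -- Claim C: `monomial m₀ 1 ∈ I ^ k`, via strong persistence of `I`
    have hIk : monomial m₀ (1 : K) ∈
        Ideal.span ((fun m => monomial m (1 : K)) '' iterAdd D k) := by
      have hcol : monomial m₀ (1 : K) ∈ Submodule.colon
          ((Ideal.span ((fun m => monomial m (1 : K)) '' D)) ^ (k + 1))
          (Ideal.span ((fun m => monomial m (1 : K)) '' D)) := by
        apply mem_colon_span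
        rintro g ⟨d, hd, rfl⟩
        rw [span_monomial_pow, monomial_mul, one_mul, mem_ideal_span_monomial_image]
        intro xi hxi
        rw [support_monomial, if_neg (one_ne_zero)] at hxi
        rw [Finset.mem_singleton] at hxi
        subst hxi
        exact claimA d hd
      rw [hspp k hk, span_monomial_pow] at hcol
      exact hcol
    obtain ⟨v, hv, hvle⟩ := mem_ideal_span_monomial_image.mp hIk m₀ (by
      rw [support_monomial, if_neg (one_ne_zero)]; exact Finset.mem_singleton_self _)
    -- assemble the dominating element of the k-fold sum of the new generators
    refine ⟨v + Finsupp.single x (min (m x) k) + Finsupp.single y (k - min (m x) k),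
      iterAdd_compose k _ _ (by omega) v hv, ?_⟩
    rw [Finsupp.le_def]
    intro i
    by_cases hix : i = x
    · subst hix
      simp only [Finsupp.add_apply, Finsupp.single_eq_same,
        Finsupp.single_eq_of_ne' hxy.symm, iterAdd_apply_eq_zero hDx _ v hv, zero_add, add_zero]
      omega
    by_cases hiy : i = y
    · subst hiy
      simp only [Finsupp.add_apply, Finsupp.single_eq_same,
        Finsupp.single_eq_of_ne' hxy, iterAdd_apply_eq_zero hDy _ v hv, zero_add, add_zero]
      omega
    · have h5 := Finsupp.le_def.mp hvle i
      rw [hm₀i i hix hiy] at h5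
      simp only [Finsupp.add_apply,
        Finsupp.single_eq_of_ne' (fun h => hix h.symm),
        Finsupp.single_eq_of_ne' (fun h => hiy h.symm), add_zero]
      exact h5
  · -- easy direction
    intro f hf
    rw [Submodule.mem_colon]
    intro p hp
    rw [smul_eq_mul]
    rw [← span_monomial_pow] at hf
    have h2 := Ideal.mul_mem_mul hf hp
    rw [← pow_succ, span_monomial_pow] at h2
    exact h2

end Stmt12Aux

/-- If the clutter `𝒞` on `X` has the strong persistence property and
`x, y ∉ X` are distinct, then the clutter with edges `{e ∪ {x}, e ∪ {y} : e ∈ E(𝒞)}`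
has the strong persistence property. -/
theorem stmt12 {n : ℕ} {K : Type*} [Field K]
    (Xs : Finset (Fin n)) (E : Finset (Finset (Fin n)))
    (hVE : ∀ e ∈ E, e ⊆ Xs)
    (hclutter : ∀ e ∈ E, ∀ f ∈ E, e ⊆ f → e = f)
    (x y : Fin n) (hxy : x ≠ y) (hx : x ∉ Xs) (hy : y ∉ Xs)
    (hspp : StrongPersistence (edgeIdeal K E)) :
    StrongPersistence (edgeIdeal K (E.image (insert x) ∪ E.image (insert y))) := by
  classical
  rcases E.eq_empty_or_nonempty with rfl | ⟨e0, he0⟩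
  · exfalso
    have h1 := hspp 1 le_rfl
    have hbot : edgeIdeal K (∅ : Finset (Finset (Fin n))) = ⊥ := by
      simp [edgeIdeal]
    rw [hbot] at h1
    have h2 : (1 : MvPolynomial (Fin n) K) ∈ (⊥ : Ideal (MvPolynomial (Fin n) K)) ^ 1 := by
      rw [← h1, Submodule.mem_colon]
      intro p hp
      rw [(Submodule.mem_bot _).mp hp]
      simp
    rw [pow_one, Submodule.mem_bot] at h2
    exact one_ne_zero h2
  · have hI : edgeIdeal K E = Ideal.span ((fun m => monomial m (1 : K)) ''
        (Stmt12Aux.ind '' (E : Set (Finset (Fin n))))) := by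
      unfold edgeIdeal
      rw [Set.image_image]
      congr 1
      exact Set.image_congr fun e _ => Stmt12Aux.prod_X_eq e
    have hJ : edgeIdeal K (E.image (insert x) ∪ E.image (insert y)) =
        Ideal.span ((fun m => monomial m (1 : K)) ''
          (((Finsupp.single x 1 + ·) '' (Stmt12Aux.ind '' (E : Set (Finset (Fin n))))) ∪
           ((Finsupp.single y 1 + ·) '' (Stmt12Aux.ind '' (E : Set (Finset (Fin n))))))) := by
      unfold edgeIdeal
      congr 1
      rw [Finset.coe_union, Finset.coe_image, Finset.coe_image, Set.image_union,
        Set.image_union, Set.image_image, Set.image_image, Set.image_image, Set.image_image,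
        Set.image_image, Set.image_image]
      congr 1
      · exact Set.image_congr fun e he => by
          rw [Stmt12Aux.prod_X_eq, Stmt12Aux.ind_insert (fun h => hx (hVE e he h))]
      · exact Set.image_congr fun e he => by
          rw [Stmt12Aux.prod_X_eq, Stmt12Aux.ind_insert (fun h => hy (hVE e he h))]
    rw [hJ]
    exact Stmt12Aux.main _ x y hxy
      (by rintro _ ⟨e, he, rfl⟩; exact Stmt12Aux.ind_apply_eq_zero (fun h => hx (hVE e he h)))
      (by rintro _ ⟨e, he, rfl⟩; exact Stmt12Aux.ind_apply_eq_zero (fun h => hy (hVE e he h)))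
      (Stmt12Aux.ind e0) ⟨e0, he0, rfl⟩ (hI ▸ hspp)
end

section
/- Let $\mathcal{C}$ be a clutter with edges $e_1,\ldots,e_r$ ($r \ge 2$) such that $e_1 = \{x,y\}$ has cardinality two, $e_1 \cap e_2 = \emptyset$, and $e_j \cap e_1 \ne \emptyset$ for all $3 \le j \le r$. Then the edge ideal $I(\mathcal{C})$ has the strong persistence property: $(I(\mathcal{C})^{k+1} : I(\mathcal{C})) = I(\mathcal{C})^k$ for all $k \ge 1$. -/
open MvPolynomial

section Aux

variable {n : ℕ} {K : Type*} [Field K]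

/-- Exponent vector (indicator) of an edge. -/
noncomputable def eind (e : Finset (Fin n)) : Fin n →₀ ℕ := ∑ i ∈ e, Finsupp.single i 1

lemma eind_apply (e : Finset (Fin n)) (j : Fin n) :
    eind e j = if j ∈ e then 1 else 0 := by
  classical
  simp only [eind, Finsupp.finset_sum_apply, Finsupp.single_apply]
  rw [Finset.sum_ite_eq' e j (fun _ => 1)]

lemma prod_X_eq (e : Finset (Fin n)) :
    (∏ i ∈ e, (X i : MvPolynomial (Fin n) K)) = monomial (eind e) 1 := by
  classical
  induction e using Finset.induction with
  | empty => simp [eind]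
  | insert a s h ih =>
    rw [Finset.prod_insert h, ih]
    rw [X, monomial_mul, one_mul]
    congr 1
    simp [eind, Finset.sum_insert h]

/-- The set of exponent vectors of degree-`k` products of edge monomials. -/
def expSet (E : Finset (Finset (Fin n))) (k : ℕ) : Set (Fin n →₀ ℕ) :=
  {d | ∃ S : Multiset (Finset (Fin n)),
      (∀ e ∈ S, e ∈ E) ∧ Multiset.card S = k ∧ (S.map eind).sum = d}

lemma edgeIdeal_eq (E : Finset (Finset (Fin n))) :
    edgeIdeal K E
      = Ideal.span ((fun d => monomial d (1 : K)) '' (eind '' (E : Set (Finset (Fin n))))) := by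
  unfold edgeIdeal
  rw [Set.image_image]
  congr 1
  exact Set.image_congr fun e _ => prod_X_eq e

lemma pow_edgeIdeal_eq (E : Finset (Finset (Fin n))) (k : ℕ) :
    (edgeIdeal K E) ^ k = Ideal.span ((fun d => monomial d (1 : K)) '' expSet E k) := by
  classical
  induction k with
  | zero =>
    rw [pow_zero, Ideal.one_eq_top]
    symm
    rw [Ideal.eq_top_iff_one]
    have h0 : (0 : Fin n →₀ ℕ) ∈ expSet E 0 :=
      ⟨0, by simp, by simp, by simp⟩
    have : monomial (0 : Fin n →₀ ℕ) (1 : K) ∈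
        Ideal.span ((fun d => monomial d (1 : K)) '' expSet E 0) :=
      Ideal.subset_span (Set.mem_image_of_mem _ h0)
    simpa using this
  | succ k ih =>
    rw [pow_succ, ih, edgeIdeal_eq, Ideal.span_mul_span']
    congr 1
    ext f
    constructor
    · rintro ⟨-, ⟨d, ⟨S, hS, hcard, rfl⟩, rfl⟩, -, ⟨-, ⟨e, he, rfl⟩, rfl⟩, rfl⟩
      refine ⟨(S.map eind).sum + eind e, ⟨e ::ₘ S, ?_, ?_, ?_⟩, ?_⟩
      · intro f hf
        rcases Multiset.mem_cons.mp hf with h | h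
        · exact h ▸ he
        · exact hS f h
      · simp [hcard]
      · simp [add_comm]
      · show _ = monomial _ 1 * monomial _ 1
        rw [monomial_mul, one_mul]
    · rintro ⟨d, ⟨S, hS, hcard, rfl⟩, rfl⟩
      have hne : S ≠ 0 := by
        intro h; rw [h] at hcard; simp at hcard
      obtain ⟨e, he⟩ := Multiset.exists_mem_of_ne_zero hne
      have hdec : e ::ₘ S.erase e = S := Multiset.cons_erase he
      refine ⟨monomial ((S.erase e).map eind).sum 1,
        ⟨((S.erase e).map eind).sum, ⟨S.erase e, ?_, ?_, rfl⟩, rfl⟩,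
        monomial (eind e) 1, ⟨eind e, ⟨e, hS e he, rfl⟩, rfl⟩, ?_⟩
      · exact fun f hf => hS f (Multiset.mem_of_mem_erase hf)
      · rw [Multiset.card_erase_of_mem he, hcard]; rfl
      · show monomial _ 1 * monomial _ 1 = _
        rw [monomial_mul, one_mul]
        congr 1
        conv_rhs => rw [← hdec]
        simp [add_comm]

/-- Pointwise value of the exponent sum of a multiset of edges. -/
lemma sum_eind_apply (S : Multiset (Finset (Fin n))) (j : Fin n) :
    ((S.map eind).sum) j = (S.map (fun e => eind e j)).sum := by
  rw [← Finsupp.applyAddHom_apply, map_multiset_sum, Multiset.map_map]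
  rfl

end Aux

section Combi

variable {n : ℕ}

/-- The key combinatorial lemma. -/
lemma combi (E : Finset (Finset (Fin n)))
    (hclutter : ∀ e ∈ E, ∀ f ∈ E, e ⊆ f → e = f)
    (x y : Fin n) (hxy : x ≠ y)
    (e₁ e₂ : Finset (Fin n)) (he₁ : e₁ ∈ E) (he₂ : e₂ ∈ E)
    (he₁eq : e₁ = {x, y}) (hdisj : Disjoint e₁ e₂)
    (hmeet : ∀ e ∈ E, e ≠ e₁ → e ≠ e₂ → (e ∩ e₁).Nonempty)
    (k : ℕ) (a : Fin n →₀ ℕ)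
    (B B' : Multiset (Finset (Fin n)))
    (hBmem : ∀ e ∈ B, e ∈ E) (hBcard : Multiset.card B = k + 1)
    (hBle : (B.map eind).sum ≤ a + eind e₁)
    (hB'mem : ∀ e ∈ B', e ∈ E) (hB'card : Multiset.card B' = k + 1)
    (hB'le : (B'.map eind).sum ≤ a + eind e₂) :
    ∃ C : Multiset (Finset (Fin n)),
      (∀ e ∈ C, e ∈ E) ∧ Multiset.card C = k ∧ (C.map eind).sum ≤ a := by
  classical
  have hxe₁ : x ∈ e₁ := by rw [he₁eq]; simp
  have hye₁ : y ∈ e₁ := by rw [he₁eq]; simp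
  have hxe₂ : x ∉ e₂ := fun h => (Finset.disjoint_left.mp hdisj hxe₁) h
  have hye₂ : y ∉ e₂ := fun h => (Finset.disjoint_left.mp hdisj hye₁) h
  -- pointwise forms of the hypotheses
  have hBp : ∀ j, ((B.map eind).sum) j ≤ a j + eind e₁ j := by
    intro j; exact (Finsupp.le_def.mp hBle j)
  have hB'p : ∀ j, ((B'.map eind).sum) j ≤ a j + eind e₂ j := by
    intro j; exact (Finsupp.le_def.mp hB'le j)
  by_cases h2 : e₂ ∈ B'
  · -- remove a copy of `e₂` from `B'`
    refine ⟨B'.erase e₂, fun e he => hB'mem e (Multiset.mem_of_mem_erase he), ?_, ?_⟩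
    · rw [Multiset.card_erase_of_mem h2, hB'card]; rfl
    · rw [Finsupp.le_def]
      intro j
      have hdec : e₂ ::ₘ B'.erase e₂ = B' := Multiset.cons_erase h2
      have : ((B'.map eind).sum) j = eind e₂ j + (((B'.erase e₂).map eind).sum) j := by
        conv_lhs => rw [← hdec]
        simp
      have h := hB'p j
      rw [this] at h
      omega
  · -- every edge of `B'` meets `e₁`, hence `k + 1 ≤ a x + a y`
    have hone : ∀ e ∈ B', 1 ≤ eind e x + eind e y := by
      intro e he
      have heE := hB'mem e he
      have hne₂ : e ≠ e₂ := fun h => h2 (h ▸ he)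
      by_cases h1 : e = e₁
      · rw [h1, eind_apply, if_pos hxe₁]; omega
      · obtain ⟨z, hz⟩ := hmeet e heE h1 hne₂
        rw [Finset.mem_inter, he₁eq] at hz
        have hz2 : z = x ∨ z = y := by
          rcases Finset.mem_insert.mp hz.2 with h | h
          · exact Or.inl h
          · exact Or.inr (Finset.mem_singleton.mp h)
        rcases hz2 with h | h
        · rw [eind_apply, if_pos (h ▸ hz.1)]; omega
        · rw [eind_apply e y, if_pos (h ▸ hz.1)]; omega
    have hcnt : k + 1 ≤ ((B'.map eind).sum) x + ((B'.map eind).sum) y := by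
      rw [sum_eind_apply, sum_eind_apply, ← Multiset.sum_map_add]
      have := Multiset.card_nsmul_le_sum
        (s := B'.map (fun e => eind e x + eind e y)) (a := 1)
        (by
          intro v hv
          obtain ⟨e, he, rfl⟩ := Multiset.mem_map.mp hv
          exact hone e he)
      rw [Multiset.card_map, hB'card] at this
      simp only [smul_eq_mul, mul_one] at this
      omega
    have hkey : k + 1 ≤ a x + a y := by
      have h1 := hB'p x
      have h2' := hB'p y
      rw [eind_apply, if_neg hxe₂] at h1
      rw [eind_apply, if_neg hye₂] at h2'
      omega
    -- now work with `B`
    by_cases h1B : e₁ ∈ B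
    · refine ⟨B.erase e₁, fun e he => hBmem e (Multiset.mem_of_mem_erase he), ?_, ?_⟩
      · rw [Multiset.card_erase_of_mem h1B, hBcard]; rfl
      · rw [Finsupp.le_def]
        intro j
        have hdec : e₁ ::ₘ B.erase e₁ = B := Multiset.cons_erase h1B
        have : ((B.map eind).sum) j = eind e₁ j + (((B.erase e₁).map eind).sum) j := by
          conv_lhs => rw [← hdec]
          simp
        have h := hBp j
        rw [this] at h
        omega
    · -- each edge of `B` contains at most one of `x`, `y`
      have hle1 : ∀ e ∈ B, eind e x + eind e y ≤ 1 := by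
        intro e he
        by_cases hx : x ∈ e
        · by_cases hy : y ∈ e
          · exfalso
            apply h1B
            have : e₁ ⊆ e := by
              rw [he₁eq]
              intro z hz
              rcases Finset.mem_insert.mp hz with rfl | hz2
              · exact hx
              · rw [Finset.mem_singleton] at hz2; exact hz2 ▸ hy
            have := hclutter e₁ he₁ e (hBmem e he) this
            exact this ▸ he
          · rw [eind_apply, eind_apply, if_pos hx, if_neg hy]
        · rw [eind_apply, eind_apply, if_neg hx]
          split <;> omega
      have hsum2 : ((B.map eind).sum) x + ((B.map eind).sum) y ≤ k + 1 := by
        rw [sum_eind_apply, sum_eind_apply, ← Multiset.sum_map_add]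
        have := Multiset.sum_le_card_nsmul
          (B.map (fun e => eind e x + eind e y)) 1
          (by
            intro v hv
            obtain ⟨e, he, rfl⟩ := Multiset.mem_map.mp hv
            exact hle1 e he)
        rw [Multiset.card_map, hBcard] at this
        simp only [smul_eq_mul, mul_one] at this
        omega
      -- not both coordinates can overflow
      have hBx : ((B.map eind).sum) x ≤ a x + 1 := by
        have := hBp x; rw [eind_apply, if_pos hxe₁] at this; omega
      have hBy : ((B.map eind).sum) y ≤ a y + 1 := by
        have := hBp y; rw [eind_apply, if_pos hye₁] at this; omega
      have hnotboth : ((B.map eind).sum) x ≤ a x ∨ ((B.map eind).sum) y ≤ a y := by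
        omega
      -- a helper to finish: remove an element `f` of `B` such that the result works
      have hfinish : ∀ f ∈ B,
          (((B.map eind).sum) x ≤ a x + eind f x) →
          (((B.map eind).sum) y ≤ a y + eind f y) →
          ∃ C : Multiset (Finset (Fin n)),
            (∀ e ∈ C, e ∈ E) ∧ Multiset.card C = k ∧ (C.map eind).sum ≤ a := by
        intro f hf hfx hfy
        refine ⟨B.erase f, fun e he => hBmem e (Multiset.mem_of_mem_erase he), ?_, ?_⟩
        · rw [Multiset.card_erase_of_mem hf, hBcard]; rfl
        · rw [Finsupp.le_def]
          intro j
          have hdec : f ::ₘ B.erase f = B := Multiset.cons_erase hf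
          have hj : ((B.map eind).sum) j = eind f j + (((B.erase f).map eind).sum) j := by
            conv_lhs => rw [← hdec]
            simp
          by_cases hjx : j = x
          · subst hjx; rw [hj] at hfx; omega
          by_cases hjy : j = y
          · subst hjy; rw [hj] at hfy; omega
          have h := hBp j
          have : eind e₁ j = 0 := by
            rw [eind_apply, if_neg]
            rw [he₁eq]
            simp [hjx, hjy]
          rw [hj, this] at h
          omega
      rcases hnotboth with hbx | hby
      · by_cases hby : ((B.map eind).sum) y ≤ a y
        · -- remove any element
          have hne : B ≠ 0 := by
            intro h; rw [h] at hBcard; simp at hBcard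
          obtain ⟨f, hf⟩ := Multiset.exists_mem_of_ne_zero hne
          exact hfinish f hf (by omega) (by omega)
        · -- y overflows: remove an edge containing y
          have hpos : 0 < ((B.map eind).sum) y := by omega
          have : ∃ f ∈ B, y ∈ f := by
            by_contra hcon
            push_neg at hcon
            have : ((B.map eind).sum) y = 0 := by
              rw [sum_eind_apply]
              apply Multiset.sum_eq_zero
              intro v hv
              obtain ⟨e, he, rfl⟩ := Multiset.mem_map.mp hv
              rw [eind_apply, if_neg (hcon e he)]
            omega
          obtain ⟨f, hf, hyf⟩ := this
          have : eind f y = 1 := by rw [eind_apply, if_pos hyf]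
          exact hfinish f hf (by omega) (by omega)
      · by_cases hbx : ((B.map eind).sum) x ≤ a x
        · have hne : B ≠ 0 := by
            intro h; rw [h] at hBcard; simp at hBcard
          obtain ⟨f, hf⟩ := Multiset.exists_mem_of_ne_zero hne
          exact hfinish f hf (by omega) (by omega)
        · have hpos : 0 < ((B.map eind).sum) x := by omega
          have : ∃ f ∈ B, x ∈ f := by
            by_contra hcon
            push_neg at hcon
            have : ((B.map eind).sum) x = 0 := by
              rw [sum_eind_apply]
              apply Multiset.sum_eq_zero
              intro v hv
              obtain ⟨e, he, rfl⟩ := Multiset.mem_map.mp hv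
              rw [eind_apply, if_neg (hcon e he)]
            omega
          obtain ⟨f, hf, hxf⟩ := this
          have : eind f x = 1 := by rw [eind_apply, if_pos hxf]
          exact hfinish f hf (by omega) (by omega)

end Combi

/-- A clutter containing an edge `e₁ = {x,y}` of cardinality two, an edge
`e₂` disjoint from `e₁`, and such that every other edge meets `e₁`, has the strong
persistence property. -/
theorem stmt13 {n : ℕ} {K : Type*} [Field K]
    (E : Finset (Finset (Fin n)))
    (hclutter : ∀ e ∈ E, ∀ f ∈ E, e ⊆ f → e = f)
    (x y : Fin n) (hxy : x ≠ y)
    (e₁ e₂ : Finset (Fin n)) (he₁ : e₁ ∈ E) (he₂ : e₂ ∈ E)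
    (he₁eq : e₁ = {x, y}) (hdisj : Disjoint e₁ e₂)
    (hmeet : ∀ e ∈ E, e ≠ e₁ → e ≠ e₂ → (e ∩ e₁).Nonempty) :
    StrongPersistence (edgeIdeal K E) := by
  classical
  intro k _
  apply le_antisymm
  · -- (I^{k+1} : I) ≤ I^k
    intro r hr
    have hgen : ∀ e ∈ E, (monomial (eind e) 1 : MvPolynomial (Fin n) K) ∈ edgeIdeal K E := by
      intro e he
      rw [← prod_X_eq]
      exact Ideal.subset_span (Set.mem_image_of_mem _ (by exact_mod_cast he))
    have hmul : ∀ e ∈ E, r * monomial (eind e) 1 ∈ (edgeIdeal K E) ^ (k + 1) := by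
      intro e he
      have := Submodule.mem_colon.mp hr _ (hgen e he)
      simpa [smul_eq_mul] using this
    rw [pow_edgeIdeal_eq, mem_ideal_span_monomial_image]
    intro m hm
    have hcoeff : r.coeff m ≠ 0 := mem_support_iff.mp hm
    -- witness from e₁
    have h1 := hmul e₁ he₁
    rw [pow_edgeIdeal_eq, mem_ideal_span_monomial_image] at h1
    have hm1 : m + eind e₁ ∈ (r * monomial (eind e₁) 1).support := by
      rw [mem_support_iff, coeff_mul_monomial]
      simpa using hcoeff
    obtain ⟨d1, ⟨B, hBmem, hBcard, rfl⟩, hd1⟩ := h1 _ hm1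
    -- witness from e₂
    have h2 := hmul e₂ he₂
    rw [pow_edgeIdeal_eq, mem_ideal_span_monomial_image] at h2
    have hm2 : m + eind e₂ ∈ (r * monomial (eind e₂) 1).support := by
      rw [mem_support_iff, coeff_mul_monomial]
      simpa using hcoeff
    obtain ⟨d2, ⟨B', hB'mem, hB'card, rfl⟩, hd2⟩ := h2 _ hm2
    obtain ⟨C, hC1, hC2, hC3⟩ := combi E hclutter x y hxy e₁ e₂ he₁ he₂ he₁eq hdisj hmeet
      k m B B' hBmem hBcard (by simpa [add_comm] using hd1)
      hB'mem hB'card (by simpa [add_comm] using hd2)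
    exact ⟨_, ⟨C, hC1, hC2, rfl⟩, hC3⟩
  · -- I^k ≤ (I^{k+1} : I)
    intro r hr
    rw [Submodule.mem_colon]
    intro p hp
    rw [smul_eq_mul, pow_succ]
    exact Ideal.mul_mem_mul hr hp
end
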